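/- A ring R is Zhou nil-clean if and only if every square element of R is the sum of a tripotent and a nilpotent that commute with each other. -/

import Mathlib

/-- A ring is Zhou nil-clean if every element is the sum of two tripotents
and a nilpotent that pairwise commute. -/
def ZhouNilClean (R : Type*) [Ring R] : Prop :=
  ∀ a : R, ∃ p q w : R, p ^ 3 = p ∧ q ^ 3 = q ∧ IsNilpotent w ∧
    Commute p q ∧ Commute p w ∧ Commute q w ∧ a = p + q + w


section CommHelpers

variable {A : Type*} [CommRing A]

private lemma idem_nil_zero {g : A} (hg : g * g = g) (hn : IsNilpotent g) : g = 0 := by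
  obtain ⟨n, hn⟩ := hn
  have hpow : ∀ m : ℕ, g ^ (m + 1) = g := by
    intro m
    induction m with
    | zero => simp
    | succ k ih => rw [pow_succ, ih, hg]
  calc g = g ^ (n + 1) := (hpow n).symm
    _ = g ^ n * g := pow_succ g n
    _ = 0 := by rw [hn, zero_mul]

private lemma idem_lift {x : A} (hx : IsNilpotent (x * x - x)) :
    ∃ e, e * e = e ∧ IsNilpotent (x - e) := by
  set I := Ideal.span {x * x - x} with hI
  have hker : ∀ z ∈ RingHom.ker (Ideal.Quotient.mk I), IsNilpotent z := by
    intro z hz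
    rw [RingHom.mem_ker, Ideal.Quotient.eq_zero_iff_mem, hI, Ideal.mem_span_singleton] at hz
    obtain ⟨c, rfl⟩ := hz
    exact (Commute.all _ _).isNilpotent_mul_right hx
  have hmem : x * x - x ∈ I := Ideal.subset_span rfl
  have hidem : IsIdempotentElem (Ideal.Quotient.mk I x) := by
    unfold IsIdempotentElem
    rw [← map_mul, Ideal.Quotient.eq]
    exact hmem
  obtain ⟨e, he, hfe⟩ :=
    exists_isIdempotentElem_eq_of_ker_isNilpotent (Ideal.Quotient.mk I) hker _ ⟨x, rfl⟩ hidem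
  refine ⟨e, he, ?_⟩
  have hxe : x - e ∈ I := Ideal.Quotient.eq.mp hfe.symm
  rw [hI, Ideal.mem_span_singleton] at hxe
  obtain ⟨c, hc⟩ := hxe
  rw [hc]
  exact (Commute.all _ _).isNilpotent_mul_right hx

private lemma idem_lift_part {x e : A} (he : e * e = e) (hxe : x * e = x)
    (hx : IsNilpotent (x * x - x)) :
    ∃ g, g * g = g ∧ g * e = g ∧ IsNilpotent (x - g) := by
  obtain ⟨g, hg, hng⟩ := idem_lift hx
  have h1 : g * (1 - e) = (g - x) * (1 - e) := by
    linear_combination -hxe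
  have h1n : IsNilpotent (g * (1 - e)) := by
    rw [h1]
    exact (Commute.all _ _).isNilpotent_mul_right (by simpa using hng.neg)
  have h2 : (g * (1 - e)) * (g * (1 - e)) = g * (1 - e) := by
    linear_combination (1 - e) ^ 2 * hg + g * he
  have h3 : g * (1 - e) = 0 := idem_nil_zero h2 h1n
  exact ⟨g, hg, by linear_combination -h3, hng⟩

private lemma tri_of_idem {g : A} (hg : g * g = g) : g ^ 3 = g := by
  linear_combination (g + 1) * hg

private lemma trilift {x e v : A} (he : e * e = e) (hxe : x * e = x) (hv : 2 * v = e)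
    (hve : v * e = v) (h3 : IsNilpotent (x ^ 3 - x)) :
    ∃ p, p ^ 3 = p ∧ p * e = p ∧ IsNilpotent (x - p) := by
  set h := (x ^ 2 + x) * v with hh
  set h' := (x ^ 2 - x) * v with hh'
  have hhe : h * e = h := by rw [hh]; linear_combination (x ^ 2 + x) * hve
  have hh'e : h' * e = h' := by rw [hh']; linear_combination (x ^ 2 - x) * hve
  have key : h * h - h = v * v * ((x + 2) * (x ^ 3 - x)) := by
    rw [hh]; linear_combination v * (x ^ 2 + x) * hv + (x ^ 2 + x) * hve
  have key' : h' * h' - h' = v * v * ((x - 2) * (x ^ 3 - x)) := by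
    rw [hh']; linear_combination v * (x ^ 2 - x) * hv + (x ^ 2 - x) * hve
  have hnh : IsNilpotent (h * h - h) := by
    rw [key, show v * v * ((x + 2) * (x ^ 3 - x)) = v * v * (x + 2) * (x ^ 3 - x) by ring]
    exact (Commute.all _ _).isNilpotent_mul_left h3
  have hnh' : IsNilpotent (h' * h' - h') := by
    rw [key', show v * v * ((x - 2) * (x ^ 3 - x)) = v * v * (x - 2) * (x ^ 3 - x) by ring]
    exact (Commute.all _ _).isNilpotent_mul_left h3
  obtain ⟨g, hg, hge, hng⟩ := idem_lift_part he hhe hnh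
  obtain ⟨g', hg', hg'e, hng'⟩ := idem_lift_part he hh'e hnh'
  have hhh' : h * h' = v * v * x * (x ^ 3 - x) := by rw [hh, hh']; ring
  have hgg'n : IsNilpotent (g * g') := by
    have : g * g' = (g - h) * g' + h * (g' - h') + h * h' := by ring
    rw [this, hhh']
    refine (Commute.all _ _).isNilpotent_add ((Commute.all _ _).isNilpotent_add ?_ ?_) ?_
    · exact (Commute.all _ _).isNilpotent_mul_right (by simpa using hng.neg)
    · exact (Commute.all _ _).isNilpotent_mul_left (by simpa using hng'.neg)
    · exact (Commute.all _ _).isNilpotent_mul_left h3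
  have hgg'idem : (g * g') * (g * g') = g * g' := by
    linear_combination g' * g' * hg + g * hg'
  have hgg' : g * g' = 0 := idem_nil_zero hgg'idem hgg'n
  refine ⟨g - g', ?_, ?_, ?_⟩
  · linear_combination (g + 1) * hg - (g' + 1) * hg' - 3 * (g - g') * hgg'
  · linear_combination hge - hg'e
  · have hx' : h - h' = x := by rw [hh, hh']; linear_combination x * hv + hxe
    have : x - (g - g') = (h - g) - (h' - g') := by linear_combination -hx'
    rw [this]
    exact (Commute.all _ _).isNilpotent_sub hng hng'

end CommHelpers

section PartSystem

variable {A : Type*} [CommRing A]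

private lemma bezout_idem {α β u v : A} (h : u * α + v * β = 1) (h0 : α * β = 0) :
    (v * β) * (v * β) = v * β ∧ 1 - v * β = u * α := by
  constructor
  · linear_combination (v * β) * h - v * u * h0
  · linear_combination -h

private lemma cast_bezout (m n : ℤ) (h : IsCoprime m n) :
    ∃ u v : A, u * (m : A) + v * (n : A) = 1 := by
  obtain ⟨a, b, hab⟩ := h
  refine ⟨(a : A), (b : A), ?_⟩
  have := congrArg (fun z : ℤ => (z : A)) hab
  push_cast at this
  simpa using this

/-- The 2/3/5-part idempotent system in a commutative ring with 60 nilpotent. -/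
private lemma part_system (h60 : IsNilpotent (60 : A)) :
    ∃ e2 e3 e5 v3 v5 c2 c3 : A,
      e2 * e2 = e2 ∧ e3 * e3 = e3 ∧ e5 * e5 = e5 ∧
      e2 * e3 = 0 ∧ e2 * e5 = 0 ∧ e3 * e5 = 0 ∧ e2 + e3 + e5 = 1 ∧
      2 * v3 = e3 ∧ v3 * e3 = v3 ∧ 2 * v5 = e5 ∧ v5 * e5 = v5 ∧
      e2 = 15 * c2 ∧ e3 = 5 * c3 := by
  obtain ⟨n, hn⟩ := h60
  set N := n + 1 with hN
  have h60N : (60 : A) ^ N = 0 := by rw [hN, pow_succ, hn, zero_mul]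
  have hzero : ∀ a b : ℤ, a * b = 60 → ((a : A)) ^ N * ((b : A)) ^ N = 0 := by
    intro a b hab
    rw [← mul_pow]
    have : ((a : A)) * ((b : A)) = ((a * b : ℤ) : A) := by push_cast; ring
    rw [this, hab]
    exact_mod_cast h60N
  have hcop : ∀ a b : ℤ, Int.gcd a b = 1 → ∃ u v : A, u * (a : A) ^ N + v * (b : A) ^ N = 1 := by
    intro a b hab
    have h1 : IsCoprime ((a : ℤ) ^ N) ((b : ℤ) ^ N) :=
      (Int.isCoprime_iff_gcd_eq_one.mpr hab).pow
    obtain ⟨u, v, huv⟩ := cast_bezout (a ^ N) (b ^ N) (A := A) h1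
    refine ⟨u, v, ?_⟩
    push_cast at huv
    exact huv
  obtain ⟨u2, v2, h2⟩ := hcop 4 15 (by decide)
  obtain ⟨u3, v3', h3⟩ := hcop 3 20 (by decide)
  obtain ⟨u5, v5', h5⟩ := hcop 5 12 (by decide)
  -- fix casts of numerals
  have c4 : ((4 : ℤ) : A) = 4 := by push_cast; ring
  have c15 : ((15 : ℤ) : A) = 15 := by push_cast; ring
  have c3' : ((3 : ℤ) : A) = 3 := by push_cast; ring
  have c20 : ((20 : ℤ) : A) = 20 := by push_cast; ring
  have c5' : ((5 : ℤ) : A) = 5 := by push_cast; ring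
  have c12 : ((12 : ℤ) : A) = 12 := by push_cast; ring
  rw [c4, c15] at h2
  rw [c3', c20] at h3
  rw [c5', c12] at h5
  set e2 := v2 * (15 : A) ^ N with he2def
  set e3 := v3' * (20 : A) ^ N with he3def
  set e5 := v5' * (12 : A) ^ N with he5def
  have hz2 : (4 : A) ^ N * (15 : A) ^ N = 0 := by
    have := hzero 4 15 (by norm_num); rw [c4, c15] at this; exact this
  have hz3 : (3 : A) ^ N * (20 : A) ^ N = 0 := by
    have := hzero 3 20 (by norm_num); rw [c3', c20] at this; exact this
  have hz5 : (5 : A) ^ N * (12 : A) ^ N = 0 := by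
    have := hzero 5 12 (by norm_num); rw [c5', c12] at this; exact this
  obtain ⟨hi2, hc2⟩ := bezout_idem h2 hz2
  obtain ⟨hi3, hc3⟩ := bezout_idem h3 hz3
  obtain ⟨hi5, hc5⟩ := bezout_idem h5 hz5
  -- orthogonality
  have hz23 : (15 : A) ^ N * (20 : A) ^ N = 0 := by
    rw [← mul_pow]
    have h1 : ((15 : A) * 20) = 60 * 5 := by norm_num
    rw [h1, mul_pow, h60N, zero_mul]
  have hz25 : (15 : A) ^ N * (12 : A) ^ N = 0 := by
    rw [← mul_pow]
    have h1 : ((15 : A) * 12) = 60 * 3 := by norm_num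
    rw [h1, mul_pow, h60N, zero_mul]
  have hz35 : (20 : A) ^ N * (12 : A) ^ N = 0 := by
    rw [← mul_pow]
    have h1 : ((20 : A) * 12) = 60 * 4 := by norm_num
    rw [h1, mul_pow, h60N, zero_mul]
  have ho23 : e2 * e3 = 0 := by rw [he2def, he3def]; linear_combination v2 * v3' * hz23
  have ho25 : e2 * e5 = 0 := by rw [he2def, he5def]; linear_combination v2 * v5' * hz25
  have ho35 : e3 * e5 = 0 := by rw [he3def, he5def]; linear_combination v3' * v5' * hz35
  -- sum to one
  have h435 : (4 : A) ^ N * ((3 : A) ^ N * (5 : A) ^ N) = 0 := by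
    rw [← mul_pow, ← mul_pow]
    have h1 : ((4 : A) * (3 * 5)) = 60 := by norm_num
    rw [h1, h60N]
  have hprod : (1 - e2) * ((1 - e3) * (1 - e5)) = u2 * (u3 * u5) * ((4:A)^N * ((3:A)^N * (5:A)^N)) := by
    rw [hc2, hc3, hc5]; ring
  have hP : (1 - e2) * ((1 - e3) * (1 - e5)) = 0 := by rw [hprod, h435, mul_zero]
  have hsum : e2 + e3 + e5 = 1 := by
    linear_combination -hP + (1 - e5) * ho23 + ho25 + ho35
  -- halves
  have hcop2 : ∀ b : ℤ, Int.gcd 2 b = 1 → ∃ u v : A, u * 2 + v * (b : A) ^ N = 1 := by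
    intro b hb
    have h1 : IsCoprime (2 : ℤ) (b ^ N) := (Int.isCoprime_iff_gcd_eq_one.mpr hb).pow_right
    obtain ⟨u, v, huv⟩ := cast_bezout 2 (b ^ N) (A := A) h1
    refine ⟨u, v, ?_⟩
    push_cast at huv
    exact huv
  obtain ⟨a3, b3, hb3⟩ := hcop2 3 (by decide)
  obtain ⟨a5, b5, hb5⟩ := hcop2 5 (by decide)
  rw [c3'] at hb3
  rw [c5'] at hb5
  have h3e3 : (3 : A) ^ N * e3 = 0 := by rw [he3def]; linear_combination v3' * hz3
  have h5e5 : (5 : A) ^ N * e5 = 0 := by rw [he5def]; linear_combination v5' * hz5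
  have h20 : (20 : A) ^ N = 4 ^ N * 5 ^ N := by
    rw [← mul_pow]; norm_num
  refine ⟨e2, e3, e5, a3 * e3, a5 * e5, v2 * 15 ^ n, v3' * (4 ^ N * 5 ^ n),
      hi2, hi3, hi5, ho23, ho25, ho35, hsum, ?_, ?_, ?_, ?_, ?_, ?_⟩
  · linear_combination e3 * hb3 - b3 * h3e3
  · linear_combination a3 * hi3
  · linear_combination e5 * hb5 - b5 * h5e5
  · linear_combination a5 * hi5
  · rw [he2def, hN, pow_succ]; ring
  · rw [he3def, h20, hN, pow_succ]; ring

end PartSystem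

section Engines

variable {A : Type*} [CommRing A]

private lemma tri_orth_sum {u v : A} (hu : u ^ 3 = u) (hv : v ^ 3 = v) (huv : u * v = 0) :
    (u + v) ^ 3 = u + v := by
  linear_combination hu + hv + 3 * (u + v) * huv

private lemma part_orth {g p e f : A} (hge : g * e = g) (hpf : p * f = p) (hef : e * f = 0) :
    g * p = 0 := by
  linear_combination -p * hge - g * e * hpf + g * p * hef

/-- Backward engine: the key commutative-algebra decomposition. -/
private lemma backward_engine {a : A} (h60 : IsNilpotent (60 : A))
    (hn2 : IsNilpotent (15 * (a ^ 2 - a))) (hn3 : IsNilpotent (5 * (a ^ 3 - a)))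
    (hn5 : IsNilpotent (a ^ 5 - a)) :
    ∃ p q w : A, p ^ 3 = p ∧ q ^ 3 = q ∧ IsNilpotent w ∧ a = p + q + w := by
  obtain ⟨e2, e3, e5, v3, v5, c2, c3, hi2, hi3, hi5, ho23, ho25, ho35, hsum,
    hv3, hv3e, hv5, hv5e, hc2, hc3⟩ := part_system h60
  -- part 2
  have hx2nil : IsNilpotent ((a * e2) * (a * e2) - a * e2) := by
    have : (a * e2) * (a * e2) - a * e2 = (15 * (a ^ 2 - a)) * c2 := by
      linear_combination a ^ 2 * hi2 + (a ^ 2 - a) * hc2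
    rw [this]
    exact (Commute.all _ _).isNilpotent_mul_right hn2
  obtain ⟨g2, hg2, hg2e, hg2n⟩ :=
    idem_lift_part hi2 (by linear_combination a * hi2) hx2nil
  -- part 3
  have hx3nil : IsNilpotent ((a * e3) ^ 3 - a * e3) := by
    have : (a * e3) ^ 3 - a * e3 = (5 * (a ^ 3 - a)) * c3 := by
      linear_combination a ^ 3 * (e3 + 1) * hi3 + (a ^ 3 - a) * hc3
    rw [this]
    exact (Commute.all _ _).isNilpotent_mul_right hn3
  obtain ⟨p3, hp3, hp3e, hp3n⟩ :=
    trilift hi3 (by linear_combination a * hi3) hv3 hv3e hx3nil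
  -- part 5
  have hb3 : (a * e5) ^ 3 = a ^ 3 * e5 := by linear_combination a ^ 3 * (e5 + 1) * hi5
  set x' := 2 * (a * e5) - (a * e5) ^ 3 with hx'def
  set y := (a * e5) ^ 3 - a * e5 with hydef
  have hx'e : x' = (2 * a - a ^ 3) * e5 := by rw [hx'def, hb3]; ring
  have hye : y = (a ^ 3 - a) * e5 := by rw [hydef, hb3]; ring
  have hfnil : IsNilpotent (a ^ 5 - a - 5 * (a ^ 3 - a)) :=
    (Commute.all _ _).isNilpotent_sub hn5 hn3
  have hx'nil : IsNilpotent (x' ^ 3 - x') := by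
    have : x' ^ 3 - x' = (a ^ 5 - a - 5 * (a ^ 3 - a)) * ((-(a ^ 4) + a ^ 2 - 3) * e5)
        + (5 * (a ^ 3 - a)) * ((-2) * e5) := by
      rw [hx'e]
      linear_combination (2 * a - a ^ 3) ^ 3 * (e5 + 1) * hi5
    rw [this]
    exact (Commute.all _ _).isNilpotent_add
      ((Commute.all _ _).isNilpotent_mul_right hfnil)
      ((Commute.all _ _).isNilpotent_mul_right hn3)
  have hynil : IsNilpotent (y ^ 3 - y) := by
    have : y ^ 3 - y = (a ^ 5 - a - 5 * (a ^ 3 - a)) * ((a ^ 4 + 2 * a ^ 2 + 9) * e5)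
        + (5 * (a ^ 3 - a)) * (7 * e5) := by
      rw [hye]
      linear_combination (a ^ 3 - a) ^ 3 * (e5 + 1) * hi5
    rw [this]
    exact (Commute.all _ _).isNilpotent_add
      ((Commute.all _ _).isNilpotent_mul_right hfnil)
      ((Commute.all _ _).isNilpotent_mul_right hn3)
  obtain ⟨p5, hp5, hp5e, hp5n⟩ :=
    trilift hi5 (by rw [hx'e]; linear_combination (2 * a - a ^ 3) * hi5) hv5 hv5e hx'nil
  obtain ⟨q5, hq5, hq5e, hq5n⟩ :=
    trilift hi5 (by rw [hye]; linear_combination (a ^ 3 - a) * hi5) hv5 hv5e hynil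
  -- assemble
  have hg2t : g2 ^ 3 = g2 := tri_of_idem hg2
  have o23 : g2 * p3 = 0 := part_orth hg2e hp3e ho23
  have o25 : g2 * p5 = 0 := part_orth hg2e hp5e ho25
  have o35 : p3 * p5 = 0 := part_orth hp3e hp5e ho35
  have hsum23 : (g2 + p3) ^ 3 = g2 + p3 := tri_orth_sum hg2t hp3 o23
  have o235 : (g2 + p3) * p5 = 0 := by linear_combination o25 + o35
  have hptri : (g2 + p3 + p5) ^ 3 = g2 + p3 + p5 := tri_orth_sum hsum23 hp5 o235
  refine ⟨g2 + p3 + p5, q5, a - (g2 + p3 + p5) - q5, hptri, hq5, ?_, by ring⟩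
  have hw : a - (g2 + p3 + p5) - q5 =
      (a * e2 - g2) + ((a * e3 - p3) + ((x' - p5) + (y - q5))) := by
    rw [hx'def, hydef]
    linear_combination -a * hsum
  rw [hw]
  exact (Commute.all _ _).isNilpotent_add hg2n
    ((Commute.all _ _).isNilpotent_add hp3n
      ((Commute.all _ _).isNilpotent_add hp5n hq5n))

/-- Forward engine: a tripotent-plus-nilpotent lift. -/
private lemma forward_engine {t : A} (h60 : IsNilpotent (60 : A))
    (hn2 : IsNilpotent (15 * (t ^ 2 - t))) (hn3 : IsNilpotent (t ^ 3 - t)) :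
    ∃ p : A, p ^ 3 = p ∧ IsNilpotent (t - p) := by
  obtain ⟨e2, e3, e5, v3, v5, c2, c3, hi2, hi3, hi5, ho23, ho25, ho35, hsum,
    hv3, hv3e, hv5, hv5e, hc2, hc3⟩ := part_system h60
  have hx2nil : IsNilpotent ((t * e2) * (t * e2) - t * e2) := by
    have : (t * e2) * (t * e2) - t * e2 = (15 * (t ^ 2 - t)) * c2 := by
      linear_combination t ^ 2 * hi2 + (t ^ 2 - t) * hc2
    rw [this]
    exact (Commute.all _ _).isNilpotent_mul_right hn2
  obtain ⟨g2, hg2, hg2e, hg2n⟩ :=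
    idem_lift_part hi2 (by linear_combination t * hi2) hx2nil
  have hx3nil : IsNilpotent ((t * e3) ^ 3 - t * e3) := by
    have : (t * e3) ^ 3 - t * e3 = (t ^ 3 - t) * e3 := by
      linear_combination t ^ 3 * (e3 + 1) * hi3
    rw [this]
    exact (Commute.all _ _).isNilpotent_mul_right hn3
  obtain ⟨p3, hp3, hp3e, hp3n⟩ :=
    trilift hi3 (by linear_combination t * hi3) hv3 hv3e hx3nil
  have hx5nil : IsNilpotent ((t * e5) ^ 3 - t * e5) := by
    have : (t * e5) ^ 3 - t * e5 = (t ^ 3 - t) * e5 := by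
      linear_combination t ^ 3 * (e5 + 1) * hi5
    rw [this]
    exact (Commute.all _ _).isNilpotent_mul_right hn3
  obtain ⟨p5, hp5, hp5e, hp5n⟩ :=
    trilift hi5 (by linear_combination t * hi5) hv5 hv5e hx5nil
  have hg2t : g2 ^ 3 = g2 := tri_of_idem hg2
  have o23 : g2 * p3 = 0 := part_orth hg2e hp3e ho23
  have o25 : g2 * p5 = 0 := part_orth hg2e hp5e ho25
  have o35 : p3 * p5 = 0 := part_orth hp3e hp5e ho35
  have hsum23 : (g2 + p3) ^ 3 = g2 + p3 := tri_orth_sum hg2t hp3 o23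
  have o235 : (g2 + p3) * p5 = 0 := by linear_combination o25 + o35
  refine ⟨g2 + p3 + p5, tri_orth_sum hsum23 hp5 o235, ?_⟩
  have hw : t - (g2 + p3 + p5) =
      (t * e2 - g2) + ((t * e3 - p3) + (t * e5 - p5)) := by
    linear_combination -t * hsum
  rw [hw]
  exact (Commute.all _ _).isNilpotent_add hg2n
    ((Commute.all _ _).isNilpotent_add hp3n hp5n)

end Engines

section DomainLemmas

variable {D : Type*} [CommRing D] [IsDomain D]

private lemma char2_sq {d : D} (h2 : (2 : D) = 0) (h6 : d ^ 6 = d ^ 2) : d ^ 2 = d := by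
  have h : d ^ 2 * (d ^ 4 - 1) = 0 := by linear_combination h6
  rcases mul_eq_zero.mp h with h | h
  · have hd : d = 0 := pow_eq_zero_iff (two_ne_zero) |>.mp h
    rw [hd]; ring
  · have hd4 : d ^ 4 = 1 := by linear_combination h
    have h4 : (d + 1) ^ 4 = 0 := by
      linear_combination hd4 + (2 * d ^ 3 + 3 * d ^ 2 + 2 * d + 1) * h2
    have hd : d + 1 = 0 := pow_eq_zero_iff (by norm_num) |>.mp h4
    have hd' : d = -1 := by linear_combination hd
    rw [hd']; linear_combination h2

private lemma char3_cube {d : D} (h3 : (3 : D) = 0) (h6 : d ^ 6 = d ^ 2)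
    (h6p : (d + 1) ^ 6 = (d + 1) ^ 2) (h6m : (d - 1) ^ 6 = (d - 1) ^ 2) : d ^ 3 = d := by
  have h : d ^ 2 * (d ^ 4 - 1) = 0 := by linear_combination h6
  rcases mul_eq_zero.mp h with h | h
  · have hd : d = 0 := pow_eq_zero_iff (two_ne_zero) |>.mp h
    rw [hd]; ring
  · have hd4 : d ^ 4 = 1 := by linear_combination h
    by_cases h1 : d = 1
    · rw [h1]; ring
    by_cases hm1 : d = -1
    · rw [hm1]; ring
    exfalso
    have hp0 : d + 1 ≠ 0 := fun hh => hm1 (by linear_combination hh)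
    have hm0 : d - 1 ≠ 0 := fun hh => h1 (by linear_combination hh)
    have hp4 : (d + 1) ^ 2 * ((d + 1) ^ 4 - 1) = 0 := by linear_combination h6p
    have hp4' : (d + 1) ^ 4 = 1 := by
      rcases mul_eq_zero.mp hp4 with hh | hh
      · exact absurd (pow_eq_zero_iff (two_ne_zero) |>.mp hh) hp0
      · linear_combination hh
    have hm4 : (d - 1) ^ 2 * ((d - 1) ^ 4 - 1) = 0 := by linear_combination h6m
    have hm4' : (d - 1) ^ 4 = 1 := by
      rcases mul_eq_zero.mp hm4 with hh | hh
      · exact absurd (pow_eq_zero_iff (two_ne_zero) |>.mp hh) hm0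
      · linear_combination hh
    have : (1 : D) = 0 := by
      linear_combination (1 + 4 * d ^ 2) * h3 - hp4' - hm4' + 2 * hd4
    exact one_ne_zero this

end DomainLemmas


section CommFacts

variable {A : Type*} [CommRing A]

private lemma tri_img {J : Ideal A} [J.IsPrime] {z : A} (hz : z ^ 3 = z) :
    Ideal.Quotient.mk J z = 0 ∨ Ideal.Quotient.mk J z = 1 ∨ Ideal.Quotient.mk J z = -1 := by
  set π := Ideal.Quotient.mk J
  have h0 : π z * ((π z - 1) * (π z + 1)) = 0 := by
    have : (π z) ^ 3 = π z := by rw [← map_pow, hz]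
    linear_combination this
  rcases mul_eq_zero.mp h0 with hh | hh
  · exact Or.inl hh
  rcases mul_eq_zero.mp hh with hh' | hh'
  · exact Or.inr (Or.inl (by linear_combination hh'))
  · exact Or.inr (Or.inr (by linear_combination hh'))

private lemma thirty_comm {P Q W : A} (hP : P ^ 3 = P) (hQ : Q ^ 3 = Q)
    (hW : IsNilpotent W) (h3 : (3 : A) = P + Q + W) : IsNilpotent (30 : A) := by
  rw [nilpotent_iff_mem_prime]
  intro J hJ
  haveI := hJ
  rw [← Ideal.Quotient.eq_zero_iff_mem, map_ofNat]
  set π := Ideal.Quotient.mk J with hπ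
  have hW0 : π W = 0 := (hW.map π).eq_zero
  have h3Q : (3 : A ⧸ J) = π P + π Q := by
    have := congrArg π h3
    rw [map_add, map_add, hW0, add_zero] at this
    rw [← this]
    exact (map_ofNat π 3).symm
  rcases tri_img (J := J) hP with hP' | hP' | hP' <;> rcases tri_img (J := J) hQ with hQ' | hQ' | hQ' <;>
    rw [hP', hQ'] at h3Q
  · linear_combination 10 * h3Q
  · linear_combination 15 * h3Q
  · have h4 : (2 : A ⧸ J) * 2 = 0 := by linear_combination h3Q
    rcases mul_eq_zero.mp h4 with hh | hh <;> linear_combination 15 * hh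
  · linear_combination 15 * h3Q
  · linear_combination 30 * h3Q
  · linear_combination 10 * h3Q
  · have h4 : (2 : A ⧸ J) * 2 = 0 := by linear_combination h3Q
    rcases mul_eq_zero.mp h4 with hh | hh <;> linear_combination 15 * hh
  · linear_combination 10 * h3Q
  · linear_combination 6 * h3Q

private lemma char_tri {J : Ideal A} [J.IsPrime] (h60 : IsNilpotent (60 : A)) :
    (2 : A ⧸ J) = 0 ∨ (3 : A ⧸ J) = 0 ∨ (5 : A ⧸ J) = 0 := by
  have h60Q : (60 : A ⧸ J) = 0 := by
    have := (h60.map (Ideal.Quotient.mk J)).eq_zero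
    rwa [map_ofNat] at this
  have h1 : (2 : A ⧸ J) * (2 * (3 * 5)) = 0 := by linear_combination h60Q
  rcases mul_eq_zero.mp h1 with hh | hh
  · exact Or.inl hh
  rcases mul_eq_zero.mp hh with hh' | hh'
  · exact Or.inl hh'
  rcases mul_eq_zero.mp hh' with hh'' | hh''
  · exact Or.inr (Or.inl hh'')
  · exact Or.inr (Or.inr hh'')

private lemma quot_six {J : Ideal A} [J.IsPrime] (key : ∀ z : A, IsNilpotent (z ^ 6 - z ^ 2))
    (z : A) : (Ideal.Quotient.mk J z) ^ 6 = (Ideal.Quotient.mk J z) ^ 2 := by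
  have h0 := ((key z).map (Ideal.Quotient.mk J)).eq_zero
  rw [map_sub, map_pow, map_pow] at h0
  exact sub_eq_zero.mp h0

private lemma bw_sixty (key : ∀ z : A, IsNilpotent (z ^ 6 - z ^ 2)) :
    IsNilpotent (60 : A) := by
  have h := key 2
  have he : ((2 : A) ^ 6 - 2 ^ 2) = 60 := by norm_num
  rwa [he] at h

private lemma bw_two {a : A} (key : ∀ z : A, IsNilpotent (z ^ 6 - z ^ 2)) :
    IsNilpotent (15 * (a ^ 2 - a)) := by
  rw [nilpotent_iff_mem_prime]
  intro J hJ
  haveI := hJ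
  rw [← Ideal.Quotient.eq_zero_iff_mem, map_mul, map_sub, map_pow, map_ofNat]
  set d := Ideal.Quotient.mk J a with hd
  rcases char_tri (J := J) (bw_sixty key) with hc | hc | hc
  · have := char2_sq hc (quot_six (J := J) key a)
    linear_combination 15 * this
  · linear_combination (5 * d ^ 2 - 5 * d) * hc
  · linear_combination (3 * d ^ 2 - 3 * d) * hc

private lemma bw_three {a : A} (key : ∀ z : A, IsNilpotent (z ^ 6 - z ^ 2)) :
    IsNilpotent (5 * (a ^ 3 - a)) := by
  rw [nilpotent_iff_mem_prime]
  intro J hJ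
  haveI := hJ
  rw [← Ideal.Quotient.eq_zero_iff_mem, map_mul, map_sub, map_pow, map_ofNat]
  set d := Ideal.Quotient.mk J a with hd
  rcases char_tri (J := J) (bw_sixty key) with hc | hc | hc
  · have := char2_sq hc (quot_six (J := J) key a)
    linear_combination (5 * d + 5) * this
  · have h6p : (d + 1) ^ 6 = (d + 1) ^ 2 := by
      have := quot_six (J := J) key (a + 1); rwa [map_add, map_one] at this
    have h6m : (d - 1) ^ 6 = (d - 1) ^ 2 := by
      have := quot_six (J := J) key (a - 1); rwa [map_sub, map_one] at this
    have := char3_cube hc (quot_six (J := J) key a) h6p h6m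
    linear_combination 5 * this
  · linear_combination (d ^ 3 - d) * hc

private lemma bw_five {a : A} (key : ∀ z : A, IsNilpotent (z ^ 6 - z ^ 2)) :
    IsNilpotent (a ^ 5 - a) := by
  rw [nilpotent_iff_mem_prime]
  intro J hJ
  haveI := hJ
  rw [← Ideal.Quotient.eq_zero_iff_mem, map_sub, map_pow]
  set d := Ideal.Quotient.mk J a with hd
  have h0 : d ^ 2 * (d ^ 4 - 1) = 0 := by linear_combination quot_six (J := J) key a
  rcases mul_eq_zero.mp h0 with hh | hh
  · have hd0 : d = 0 := pow_eq_zero_iff two_ne_zero |>.mp hh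
    rw [hd0]; ring
  · linear_combination d * hh

private lemma fw_three {P Q : A} (hP : P ^ 3 = P) (hQ : Q ^ 3 = Q)
    (h30 : IsNilpotent (30 : A)) :
    IsNilpotent (((P + Q) ^ 2) ^ 3 - (P + Q) ^ 2) := by
  rw [nilpotent_iff_mem_prime]
  intro J hJ
  haveI := hJ
  rw [← Ideal.Quotient.eq_zero_iff_mem, map_sub, map_pow, map_pow, map_add]
  have h30Q : (30 : A ⧸ J) = 0 := by
    have := (h30.map (Ideal.Quotient.mk J)).eq_zero
    rwa [map_ofNat] at this
  rcases tri_img (J := J) hP with h1 | h1 | h1 <;> rcases tri_img (J := J) hQ with h2 | h2 | h2 <;>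
    rw [h1, h2] <;>
    first
      | linear_combination 2 * h30Q
      | norm_num

private lemma fw_two {P Q : A} (hP : P ^ 3 = P) (hQ : Q ^ 3 = Q)
    (h30 : IsNilpotent (30 : A)) :
    IsNilpotent (15 * (((P + Q) ^ 2) ^ 2 - (P + Q) ^ 2)) := by
  rw [nilpotent_iff_mem_prime]
  intro J hJ
  haveI := hJ
  rw [← Ideal.Quotient.eq_zero_iff_mem, map_mul, map_sub, map_pow, map_pow, map_add, map_ofNat]
  have h30Q : (30 : A ⧸ J) = 0 := by
    have := (h30.map (Ideal.Quotient.mk J)).eq_zero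
    rwa [map_ofNat] at this
  rcases tri_img (J := J) hP with h1 | h1 | h1 <;> rcases tri_img (J := J) hQ with h2 | h2 | h2 <;>
    rw [h1, h2] <;>
    first
      | linear_combination 6 * h30Q
      | norm_num

end CommFacts
section Glue

variable {R : Type*} [Ring R]

private lemma six_two {x p w : R} (hp : p ^ 3 = p) (hw : IsNilpotent w)
    (hc : Commute p w) (hx : x ^ 2 = p + w) : IsNilpotent (x ^ 6 - x ^ 2) := by
  have hcomm : ∀ u ∈ ({p, w} : Set R), ∀ v ∈ ({p, w} : Set R), u * v = v * u := by
    rintro u (rfl | rfl) v (rfl | rfl) <;> first | rfl | exact hc.eq | exact hc.symm.eq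
  letI : CommRing (Algebra.adjoin ℤ ({p, w} : Set R)) := Algebra.adjoinCommRingOfComm ℤ hcomm
  let P : Algebra.adjoin ℤ ({p, w} : Set R) := ⟨p, Algebra.subset_adjoin (by simp)⟩
  let W : Algebra.adjoin ℤ ({p, w} : Set R) := ⟨w, Algebra.subset_adjoin (by simp)⟩
  have hP : P ^ 3 = P := Subtype.ext (by rw [SubmonoidClass.coe_pow]; exact hp)
  have hW : IsNilpotent W := by
    obtain ⟨n, hn⟩ := hw
    exact ⟨n, Subtype.ext (by rw [SubmonoidClass.coe_pow]; exact hn)⟩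
  have key : ((P + W) ^ 3 - (P + W)) = W * (3 * P ^ 2 + 3 * (P * W) + W ^ 2 - 1) := by
    linear_combination hP
  have knil : IsNilpotent ((P + W) ^ 3 - (P + W)) := by
    rw [key]; exact (Commute.all _ _).isNilpotent_mul_right hW
  obtain ⟨n, hn⟩ := knil
  refine ⟨n, ?_⟩
  have hco : ((((P + W) ^ 3 - (P + W)) : _) : R) = x ^ 6 - x ^ 2 := by
    have c1 : ((P + W : _) : R) = x ^ 2 := by rw [hx]; rfl
    have c2 : ((((P + W) ^ 3) : _) : R) = (x ^ 2) ^ 3 := by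
      rw [SubmonoidClass.coe_pow, c1]
    have c3 : ((((P + W) ^ 3 - (P + W)) : _) : R) =
        ((((P + W) ^ 3) : _) : R) - ((P + W : _) : R) := rfl
    rw [c3, c2, c1, ← pow_mul]
  calc (x ^ 6 - x ^ 2) ^ n = ((((P + W) ^ 3 - (P + W)) : _) : R) ^ n := by rw [hco]
    _ = ((((P + W) ^ 3 - (P + W)) ^ n : _) : R) := by rw [SubmonoidClass.coe_pow]
    _ = 0 := by rw [hn]; rfl

private lemma thirty_nilpotent (h : ∀ a : R, ∃ p q w : R, p ^ 3 = p ∧ q ^ 3 = q ∧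
    IsNilpotent w ∧ Commute p q ∧ Commute p w ∧ Commute q w ∧ a = p + q + w) :
    IsNilpotent (30 : R) := by
  obtain ⟨p, q, w, hp, hq, hw, hpq, hpw, hqw, h3⟩ := h 3
  have hcomm : ∀ u ∈ ({p, q, w} : Set R), ∀ v ∈ ({p, q, w} : Set R), u * v = v * u := by
    rintro u (rfl | rfl | rfl) v (rfl | rfl | rfl)
    · rfl
    · exact hpq.eq
    · exact hpw.eq
    · exact hpq.symm.eq
    · rfl
    · exact hqw.eq
    · exact hpw.symm.eq
    · exact hqw.symm.eq
    · rfl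
  letI : CommRing (Algebra.adjoin ℤ ({p, q, w} : Set R)) := Algebra.adjoinCommRingOfComm ℤ hcomm
  let P : Algebra.adjoin ℤ ({p, q, w} : Set R) := ⟨p, Algebra.subset_adjoin (by simp)⟩
  let Q : Algebra.adjoin ℤ ({p, q, w} : Set R) := ⟨q, Algebra.subset_adjoin (by simp)⟩
  let W : Algebra.adjoin ℤ ({p, q, w} : Set R) := ⟨w, Algebra.subset_adjoin (by simp)⟩
  have hP : P ^ 3 = P := Subtype.ext (by rw [SubmonoidClass.coe_pow]; exact hp)
  have hQ : Q ^ 3 = Q := Subtype.ext (by rw [SubmonoidClass.coe_pow]; exact hq)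
  have hW : IsNilpotent W := by
    obtain ⟨n, hn⟩ := hw
    exact ⟨n, Subtype.ext (by rw [SubmonoidClass.coe_pow]; exact hn)⟩
  have h3A : (3 : Algebra.adjoin ℤ ({p, q, w} : Set R)) = P + Q + W := by
    have : ((3 : Algebra.adjoin ℤ ({p, q, w} : Set R)) : R) = ((P + Q + W : _) : R) := by
      push_cast
      exact h3
    exact Subtype.ext this
  have h30 := thirty_comm hP hQ hW h3A
  obtain ⟨n, hn⟩ := h30
  refine ⟨n, ?_⟩
  have h30c : ((30 : Algebra.adjoin ℤ ({p, q, w} : Set R)) : R) = 30 := by norm_cast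
  calc (30 : R) ^ n = (((30 : Algebra.adjoin ℤ ({p, q, w} : Set R)) ^ n : _) : R) := by
        rw [SubmonoidClass.coe_pow, h30c]
    _ = 0 := by rw [hn]; rfl

end Glue

theorem stmt_14 (R : Type*) [Ring R] :
    ZhouNilClean R ↔
      ∀ x : R, ∃ p w : R, p ^ 3 = p ∧ IsNilpotent w ∧ Commute p w ∧ x ^ 2 = p + w := by
  constructor
  · intro H x
    obtain ⟨p, q, w, hp, hq, hw, hpq, hpw, hqw, hx⟩ := H x
    have hcomm : ∀ u ∈ ({p, q, w} : Set R), ∀ v ∈ ({p, q, w} : Set R), u * v = v * u := by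
      rintro u (rfl | rfl | rfl) v (rfl | rfl | rfl)
      · rfl
      · exact hpq.eq
      · exact hpw.eq
      · exact hpq.symm.eq
      · rfl
      · exact hqw.eq
      · exact hpw.symm.eq
      · exact hqw.symm.eq
      · rfl
    letI : CommRing (Algebra.adjoin ℤ ({p, q, w} : Set R)) := Algebra.adjoinCommRingOfComm ℤ hcomm
    let P : Algebra.adjoin ℤ ({p, q, w} : Set R) := ⟨p, Algebra.subset_adjoin (by simp)⟩
    let Q : Algebra.adjoin ℤ ({p, q, w} : Set R) := ⟨q, Algebra.subset_adjoin (by simp)⟩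
    let W : Algebra.adjoin ℤ ({p, q, w} : Set R) := ⟨w, Algebra.subset_adjoin (by simp)⟩
    have hP : P ^ 3 = P := Subtype.ext (by rw [SubmonoidClass.coe_pow]; exact hp)
    have hQ : Q ^ 3 = Q := Subtype.ext (by rw [SubmonoidClass.coe_pow]; exact hq)
    have hW : IsNilpotent W := by
      obtain ⟨n, hn⟩ := hw
      exact ⟨n, Subtype.ext (by rw [SubmonoidClass.coe_pow]; exact hn)⟩
    have h30R : IsNilpotent (30 : R) := thirty_nilpotent H
    have h30A : IsNilpotent (30 : Algebra.adjoin ℤ ({p, q, w} : Set R)) := by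
      obtain ⟨n, hn⟩ := h30R
      refine ⟨n, Subtype.ext ?_⟩
      rw [SubmonoidClass.coe_pow]
      rw [show ((30 : Algebra.adjoin ℤ ({p, q, w} : Set R)) : R) = 30 by norm_cast, hn]
      rfl
    have h60A : IsNilpotent (60 : Algebra.adjoin ℤ ({p, q, w} : Set R)) := by
      obtain ⟨n, hn⟩ := h30A
      exact ⟨n, by rw [show (60 : Algebra.adjoin ℤ ({p, q, w} : Set R)) = 2 * 30 by norm_num,
        mul_pow, hn, mul_zero]⟩
    obtain ⟨p0, hp0, hp0n⟩ := forward_engine h60A (fw_two hP hQ h30A) (fw_three hP hQ h30A)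
    have hXco : ((P + Q + W : Algebra.adjoin ℤ ({p, q, w} : Set R)) : R) = x := by
      have : ((P + Q + W : Algebra.adjoin ℤ ({p, q, w} : Set R)) : R) = p + q + w := rfl
      rw [this, hx]
    have hnil : IsNilpotent ((P + Q + W) ^ 2 - p0) := by
      have hsplit : (P + Q + W) ^ 2 - p0 = ((P + Q) ^ 2 - p0) + (W * (2 * (P + Q) + W)) := by
        ring
      rw [hsplit]
      exact (Commute.all _ _).isNilpotent_add hp0n ((Commute.all _ _).isNilpotent_mul_right hW)
    refine ⟨(p0 : R), (((P + Q + W) ^ 2 - p0 : Algebra.adjoin ℤ ({p, q, w} : Set R)) : R),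
      ?_, ?_, ?_, ?_⟩
    · rw [← SubmonoidClass.coe_pow, hp0]
    · obtain ⟨n, hn⟩ := hnil
      exact ⟨n, by rw [← SubmonoidClass.coe_pow, hn]; rfl⟩
    · exact congrArg Subtype.val (mul_comm p0 ((P + Q + W) ^ 2 - p0))
    · calc x ^ 2 = (((P + Q + W) ^ 2 : Algebra.adjoin ℤ ({p, q, w} : Set R)) : R) := by
            rw [SubmonoidClass.coe_pow, hXco]
        _ = ((p0 + ((P + Q + W) ^ 2 - p0) : Algebra.adjoin ℤ ({p, q, w} : Set R)) : R) := by
            rw [show p0 + ((P + Q + W) ^ 2 - p0) = (P + Q + W) ^ 2 from by ring]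
        _ = (p0 : R) + (((P + Q + W) ^ 2 - p0 : Algebra.adjoin ℤ ({p, q, w} : Set R)) : R) :=
            rfl
  · intro H a
    have keyR : ∀ x : R, IsNilpotent (x ^ 6 - x ^ 2) := by
      intro x
      obtain ⟨p, w, hp, hw, hc, hx⟩ := H x
      exact six_two hp hw hc hx
    have hcomm : ∀ u ∈ ({a} : Set R), ∀ v ∈ ({a} : Set R), u * v = v * u := by
      rintro u rfl v rfl; rfl
    letI : CommRing (Algebra.adjoin ℤ ({a} : Set R)) := Algebra.adjoinCommRingOfComm ℤ hcomm
    let α : Algebra.adjoin ℤ ({a} : Set R) := ⟨a, Algebra.subset_adjoin rfl⟩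
    have keyA : ∀ z : Algebra.adjoin ℤ ({a} : Set R), IsNilpotent (z ^ 6 - z ^ 2) := by
      intro z
      obtain ⟨n, hn⟩ := keyR (z : R)
      refine ⟨n, Subtype.ext ?_⟩
      rw [SubmonoidClass.coe_pow]
      have hc2 : ((z ^ 6 - z ^ 2 : Algebra.adjoin ℤ ({a} : Set R)) : R)
          = (z : R) ^ 6 - (z : R) ^ 2 := by
        have : ((z ^ 6 - z ^ 2 : Algebra.adjoin ℤ ({a} : Set R)) : R)
            = ((z ^ 6 : Algebra.adjoin ℤ ({a} : Set R)) : R)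
              - ((z ^ 2 : Algebra.adjoin ℤ ({a} : Set R)) : R) := rfl
        rw [this, SubmonoidClass.coe_pow, SubmonoidClass.coe_pow]
      rw [hc2, hn]
      rfl
    obtain ⟨pp, qq, ww, hp3, hq3, hwn, hdec⟩ := backward_engine (a := α) (bw_sixty keyA)
      (bw_two (a := α) keyA) (bw_three (a := α) keyA) (bw_five (a := α) keyA)
    refine ⟨(pp : R), (qq : R), (ww : R), ?_, ?_, ?_, ?_, ?_, ?_, ?_⟩
    · rw [← SubmonoidClass.coe_pow, hp3]
    · rw [← SubmonoidClass.coe_pow, hq3]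
    · obtain ⟨n, hn⟩ := hwn
      exact ⟨n, by rw [← SubmonoidClass.coe_pow, hn]; rfl⟩
    · exact congrArg Subtype.val (mul_comm pp qq)
    · exact congrArg Subtype.val (mul_comm pp ww)
    · exact congrArg Subtype.val (mul_comm qq ww)
    · exact congrArg Subtype.val hdec
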